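/- Let q be a prime power and L a field extension of Fq of degree m. Let 1 ≤ k < n, let H ∈ L^{k×n} have rank k, and let C = {x ∈ L^n : Hx = 0}. If for every matrix B ∈ Fq^{(n−k)×n} (viewed in L^{(n−k)×n} via the embedding Fq ⊆ L) the rank over L of the stacked n×n matrix [H; B] equals rank H + rank B, then the minimum rank distance of C equals k + 1. -/

import Mathlib

set_option autoImplicit false

open Matrix

/-- The rank weight of `x ∈ L^n`: the dimension over `F` of the `F`-span of its coordinates. -/
noncomputable def rankWeight (F : Type*) {L : Type*} [Field F] [Field L] [Algebra F L]
    {n : ℕ} (x : Fin n → L) : ℕ :=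
  Module.finrank F (Submodule.span F (Set.range x))

/-- The minimum rank distance of a code `C ⊆ L^n` equals `d`. -/
def minRankDistEq (F : Type*) {L : Type*} [Field F] [Field L] [Algebra F L]
    {n : ℕ} (C : Set (Fin n → L)) (d : ℕ) : Prop :=
  IsLeast {e | ∃ x ∈ C, ∃ y ∈ C, x ≠ y ∧ rankWeight F (x - y) = e} d

/-- Lower bound: any nonzero codeword has rank weight at least `k + 1`. -/
lemma rankWeight_lower_bound {F L : Type} [Field F] [Field L] [Algebra F L]
    {n k : ℕ} (hkn : k ≤ n)
    (H : Matrix (Fin k) (Fin n) L) (hH : H.rank = k)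
    (hrank : ∀ B : Matrix (Fin (n - k)) (Fin n) F,
      (Matrix.fromRows H (B.map (algebraMap F L))).rank = H.rank + B.rank)
    (c : Fin n → L) (hc : H *ᵥ c = 0) (hc0 : c ≠ 0) : k + 1 ≤ rankWeight F c := by
  by_contra hlt
  push_neg at hlt
  have hwk : rankWeight F c ≤ k := Nat.lt_succ_iff.mp hlt
  classical
  set V := Submodule.span F (Set.range c) with hV
  haveI : FiniteDimensional F V := FiniteDimensional.span_of_finite F (Set.finite_range c)
  set w := Module.finrank F V with hw
  have hwk' : w ≤ k := hwk
  let b := Module.finBasis F V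
  have hcV : ∀ j, c j ∈ V := fun j => Submodule.subset_span ⟨j, rfl⟩
  -- the coordinate matrix of c over a basis of V
  let M : Matrix (Fin w) (Fin n) F := Matrix.of fun i j => b.repr ⟨c j, hcV j⟩ i
  have hcj : ∀ j, c j = ∑ i, algebraMap F L (M i j) * (b i : L) := by
    intro j
    have h1 := b.sum_repr ⟨c j, hcV j⟩
    have h2 := congrArg (Subtype.val) h1
    simp only [AddSubmonoidClass.coe_finset_sum, SetLike.val_smul] at h2
    rw [← h2]
    refine Finset.sum_congr rfl fun i _ => ?_
    rw [Algebra.smul_def]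
    rfl
  -- the kernel of M over F has dimension at least n - k
  set W := LinearMap.ker (Matrix.mulVecLin M) with hW
  have hrankM : M.rank + Module.finrank F W = n := by
    have := LinearMap.finrank_range_add_finrank_ker (Matrix.mulVecLin M)
    rwa [Module.finrank_fin_fun, ← Matrix.rank] at this
  have hMw : M.rank ≤ w := le_trans (Matrix.rank_le_card_height M) (by simp)
  have hdim : n - k ≤ Module.finrank F W := by omega
  let bw := Module.finBasis F W
  have hd : n - k ≤ Module.finrank F W := hdim
  let v : Fin (n - k) → (Fin n → F) := fun i => (bw (Fin.castLE hd i) : Fin n → F)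
  have hvW : ∀ i, M *ᵥ v i = 0 := fun i => (bw (Fin.castLE hd i)).2
  have hvind : LinearIndependent F v := by
    have h1 : LinearIndependent F (fun i : Fin (n - k) => bw (Fin.castLE hd i)) :=
      bw.linearIndependent.comp _ (Fin.castLE_injective hd)
    exact h1.map' W.subtype (Submodule.ker_subtype W)
  let B : Matrix (Fin (n - k)) (Fin n) F := Matrix.of fun i j => v i j
  have hBrank : B.rank = n - k := by
    rw [← Matrix.rank_transpose, Matrix.rank_eq_finrank_span_cols]
    have : Set.range Bᵀ.col = Set.range v := rfl
    rw [this, finrank_span_eq_card hvind, Fintype.card_fin]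
  -- the stacked matrix has rank n
  have hfull : (Matrix.fromRows H (B.map (algebraMap F L))).rank = n := by
    rw [hrank B, hH, hBrank]
    omega
  -- c is in the kernel of the stacked matrix
  have hBc : (B.map (algebraMap F L)) *ᵥ c = 0 := by
    funext r
    show ∑ j, (algebraMap F L (B r j)) * c j = 0
    calc ∑ j, (algebraMap F L (B r j)) * c j
        = ∑ j, ∑ i, algebraMap F L (B r j) * (algebraMap F L (M i j) * (b i : L)) := by
          refine Finset.sum_congr rfl fun j _ => ?_
          rw [hcj j, Finset.mul_sum]
      _ = ∑ i, ∑ j, algebraMap F L (B r j) * (algebraMap F L (M i j) * (b i : L)) :=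
          Finset.sum_comm
      _ = ∑ i : Fin w, algebraMap F L ((M *ᵥ v r) i) * (b i : L) := by
          refine Finset.sum_congr rfl fun i _ => ?_
          have : (M *ᵥ v r) i = ∑ j, M i j * v r j := rfl
          rw [this, map_sum, Finset.sum_mul]
          refine Finset.sum_congr rfl fun j _ => ?_
          rw [_root_.map_mul]
          have hbv : B r j = v r j := rfl
          rw [hbv]
          ring
      _ = 0 := by
          refine Finset.sum_eq_zero fun i _ => ?_
          rw [hvW r]
          simp
  have hAc : (Matrix.fromRows H (B.map (algebraMap F L))) *ᵥ c = 0 := by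
    rw [Matrix.fromRows_mulVec, hc, hBc]
    funext x
    cases x <;> rfl
  -- since the stacked matrix has rank n, its kernel is trivial
  set A := Matrix.fromRows H (B.map (algebraMap F L)) with hA
  have hker : Module.finrank L (LinearMap.ker A.mulVecLin) = 0 := by
    have h1 := LinearMap.finrank_range_add_finrank_ker (Matrix.mulVecLin A)
    rw [Module.finrank_fin_fun, ← Matrix.rank, hfull] at h1
    omega
  have hkerbot : LinearMap.ker A.mulVecLin = ⊥ := Submodule.finrank_eq_zero.mp hker
  have hcmem : c ∈ LinearMap.ker A.mulVecLin := by
    simp only [LinearMap.mem_ker, Matrix.mulVecLin_apply]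
    exact hAc
  rw [hkerbot, Submodule.mem_bot] at hcmem
  exact hc0 hcmem

theorem minRankDist_eq_of_rank_fromRows_add
    (q m : ℕ) (hq : IsPrimePow q)
    (F L : Type) [Field F] [Fintype F] (hF : Fintype.card F = q)
    [Field L] [Algebra F L] (hm : Module.finrank F L = m)
    (n k : ℕ) (hk : 1 ≤ k) (hkn : k < n)
    (H : Matrix (Fin k) (Fin n) L) (hH : H.rank = k)
    (hrank : ∀ B : Matrix (Fin (n - k)) (Fin n) F,
      (Matrix.fromRows H (B.map (algebraMap F L))).rank = H.rank + B.rank) :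
    minRankDistEq F {x : Fin n → L | H *ᵥ x = 0} (k + 1) := by
  classical
  have hkn' : k ≤ n := le_of_lt hkn
  have hk1n : k + 1 ≤ n := hkn
  -- columns of H indexed by the first k+1 indices are linearly dependent
  let v : Fin (k + 1) → (Fin k → L) := fun i r => H r (Fin.castLE hk1n i)
  have hnli : ¬ LinearIndependent L v := by
    intro h
    have := h.fintype_card_le_finrank
    rw [Module.finrank_fin_fun, Fintype.card_fin] at this
    omega
  obtain ⟨g, hgsum, i₀, hgi₀⟩ := Fintype.not_linearIndependent_iff.mp hnli
  let c : Fin n → L := fun j => if h : (j : ℕ) < k + 1 then g ⟨j, h⟩ else 0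
  have hcv : ∀ i : Fin (k + 1), c (Fin.castLE hk1n i) = g i := by
    intro i
    show dite _ _ _ = _
    rw [dif_pos (by simpa using i.isLt)]
    exact congrArg g (Fin.ext rfl)
  have hcC : H *ᵥ c = 0 := by
    funext r
    show ∑ j, H r j * c j = 0
    have h1 : ∑ j, H r j * c j
        = ∑ j ∈ Finset.univ.map (Fin.castLEEmb hk1n), H r j * c j := by
      refine (Finset.sum_subset (Finset.subset_univ _) fun j _ hj => ?_).symm
      have hjk : ¬ ((j : ℕ) < k + 1) := by
        intro hjlt
        exact hj (Finset.mem_map.mpr ⟨⟨(j : ℕ), hjlt⟩, Finset.mem_univ _, Fin.ext rfl⟩)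
      have : c j = 0 := dif_neg hjk
      rw [this, mul_zero]
    rw [h1, Finset.sum_map]
    have h2 : ∀ i : Fin (k + 1),
        H r (Fin.castLEEmb hk1n i) * c (Fin.castLEEmb hk1n i) = g i * v i r := by
      intro i
      rw [show (Fin.castLEEmb hk1n i) = Fin.castLE hk1n i from rfl, hcv i]
      ring
    rw [Finset.sum_congr rfl fun i _ => h2 i]
    have := congrFun hgsum r
    simpa [Finset.sum_apply] using this
  have hc0 : c ≠ 0 := by
    intro h
    apply hgi₀
    have := congrFun h (Fin.castLE hk1n i₀)
    rwa [hcv i₀] at this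
  have hge : k + 1 ≤ rankWeight F c :=
    rankWeight_lower_bound hkn' H hH hrank c hcC hc0
  have hle : rankWeight F c ≤ k + 1 := by
    have hsub : Set.range c ⊆ insert 0 (Set.range g) := by
      rintro x ⟨j, rfl⟩
      by_cases h : (j : ℕ) < k + 1
      · right
        refine ⟨⟨j, h⟩, ?_⟩
        show g ⟨(j : ℕ), h⟩ = dite _ _ _
        rw [dif_pos h]
      · left
        exact dif_neg h
    have hspan : Submodule.span F (Set.range c) ≤ Submodule.span F (Set.range g) := by
      exact le_trans (Submodule.span_mono hsub) (le_of_eq Submodule.span_insert_zero)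
    haveI : FiniteDimensional F (Submodule.span F (Set.range g)) :=
      FiniteDimensional.span_of_finite F (Set.finite_range g)
    calc rankWeight F c ≤ Module.finrank F (Submodule.span F (Set.range g)) :=
          Submodule.finrank_mono hspan
      _ ≤ (Set.range g).toFinset.card := finrank_span_le_card _
      _ ≤ k + 1 := by
          rw [Set.toFinset_range]
          exact le_trans (Finset.card_image_le) (by simp)
  have hcw : rankWeight F c = k + 1 := le_antisymm hle hge
  constructor
  · refine ⟨c, hcC, 0, ?_, hc0, ?_⟩
    · show H *ᵥ (0 : Fin n → L) = 0
      exact Matrix.mulVec_zero H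
    · rw [sub_zero, hcw]
  · rintro e ⟨x, hx, y, hy, hxy, rfl⟩
    have hxyC : H *ᵥ (x - y) = 0 := by
      rw [Matrix.mulVec_sub, hx, hy, sub_zero]
    exact rankWeight_lower_bound hkn' H hH hrank (x - y) hxyC (sub_ne_zero.mpr hxy)
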